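/- Suppose x ≥ 0 satisfies x ≤ B·(1+x)^{2/9}·x^{1/3} + L·x^{2/3} for nonnegative constants B, L. Then x ≤ C·(1 + L^3 + B^{9/4}) for some absolute constant C. -/
import Mathlib


theorem stmt_7 : ∃ C : ℝ, 0 < C ∧ ∀ x B L : ℝ, 0 ≤ x → 0 ≤ B → 0 ≤ L →
    x ≤ B * (1 + x) ^ ((2:ℝ)/9) * x ^ ((1:ℝ)/3) + L * x ^ ((2:ℝ)/3) →
    x ≤ C * (1 + L ^ 3 + B ^ ((9:ℝ)/4)) := by
  refine ⟨23, by norm_num, ?_⟩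
  intro x B L hx hB hL h
  have hB94 : (0:ℝ) ≤ B ^ ((9:ℝ)/4) := Real.rpow_nonneg hB _
  have hL3 : (0:ℝ) ≤ L ^ 3 := by positivity
  rcases le_or_gt x 1 with hx1 | hx1
  · nlinarith
  have hx0 : (0:ℝ) < x := by linarith
  -- (1+x)^{2/9} ≤ 2 * x^{2/9}
  have h2 : (1 + x) ^ ((2:ℝ)/9) ≤ 2 * x ^ ((2:ℝ)/9) := by
    calc (1 + x) ^ ((2:ℝ)/9) ≤ (2 * x) ^ ((2:ℝ)/9) :=
          Real.rpow_le_rpow (by linarith) (by linarith) (by norm_num)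
      _ = 2 ^ ((2:ℝ)/9) * x ^ ((2:ℝ)/9) := Real.mul_rpow (by norm_num) hx
      _ ≤ 2 * x ^ ((2:ℝ)/9) := by
          have h21 : (2:ℝ) ^ ((2:ℝ)/9) ≤ 2 ^ (1:ℝ) :=
            Real.rpow_le_rpow_of_exponent_le (by norm_num) (by norm_num)
          rw [Real.rpow_one] at h21
          exact mul_le_mul_of_nonneg_right h21 (Real.rpow_nonneg hx _)
  have hmul : x ^ ((2:ℝ)/9) * x ^ ((1:ℝ)/3) = x ^ ((5:ℝ)/9) := by
    rw [← Real.rpow_add hx0]; norm_num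
  have h3 : x ≤ 2 * B * x ^ ((5:ℝ)/9) + L * x ^ ((2:ℝ)/3) := by
    have : B * (1 + x) ^ ((2:ℝ)/9) * x ^ ((1:ℝ)/3)
        ≤ 2 * B * x ^ ((5:ℝ)/9) := by
      have hx13 : (0:ℝ) ≤ x ^ ((1:ℝ)/3) := Real.rpow_nonneg hx _
      calc B * (1 + x) ^ ((2:ℝ)/9) * x ^ ((1:ℝ)/3)
          ≤ B * (2 * x ^ ((2:ℝ)/9)) * x ^ ((1:ℝ)/3) := by
            apply mul_le_mul_of_nonneg_right _ hx13
            exact mul_le_mul_of_nonneg_left h2 hB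
        _ = 2 * B * (x ^ ((2:ℝ)/9) * x ^ ((1:ℝ)/3)) := by ring
        _ = 2 * B * x ^ ((5:ℝ)/9) := by rw [hmul]
    linarith
  have hx59 : (0:ℝ) < x ^ ((5:ℝ)/9) := Real.rpow_pos_of_pos hx0 _
  have hx23 : (0:ℝ) < x ^ ((2:ℝ)/3) := Real.rpow_pos_of_pos hx0 _
  by_cases hc : x / 2 ≤ 2 * B * x ^ ((5:ℝ)/9)
  · -- B term dominates: x^{4/9} ≤ 4B
    have hsplit : x ^ ((5:ℝ)/9) * x ^ ((4:ℝ)/9) = x := by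
      rw [← Real.rpow_add hx0]; norm_num
    have h4 : x ^ ((4:ℝ)/9) ≤ 4 * B := by
      have : x ^ ((5:ℝ)/9) * x ^ ((4:ℝ)/9) ≤ x ^ ((5:ℝ)/9) * (4 * B) := by
        rw [hsplit]; nlinarith
      exact le_of_mul_le_mul_left (by linarith [this]) hx59
    have h5 : (x ^ ((4:ℝ)/9)) ^ ((9:ℝ)/4) ≤ (4 * B) ^ ((9:ℝ)/4) :=
      Real.rpow_le_rpow (Real.rpow_nonneg hx _) h4 (by norm_num)
    rw [← Real.rpow_mul hx] at h5
    norm_num at h5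
    rw [Real.mul_rpow (by norm_num) hB] at h5
    have h49 : (4:ℝ) ^ ((9:ℝ)/4) ≤ 23 := by
      have hpos : (0:ℝ) ≤ (4:ℝ) ^ ((9:ℝ)/4) := Real.rpow_nonneg (by norm_num) _
      have hp : ((4:ℝ) ^ ((9:ℝ)/4)) ^ (4:ℕ) ≤ (23:ℝ) ^ (4:ℕ) := by
        rw [← Real.rpow_natCast ((4:ℝ) ^ ((9:ℝ)/4)) 4, ← Real.rpow_mul (by norm_num)]
        norm_num
      exact le_of_pow_le_pow_left₀ (by norm_num) (by norm_num) hp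
    have : x ≤ 23 * B ^ ((9:ℝ)/4) := by
      calc x ≤ 4 ^ ((9:ℝ)/4) * B ^ ((9:ℝ)/4) := h5
        _ ≤ 23 * B ^ ((9:ℝ)/4) := mul_le_mul_of_nonneg_right h49 hB94
    nlinarith
  · -- L term dominates: x^{1/3} ≤ 2L
    push_neg at hc
    have hLbig : x / 2 ≤ L * x ^ ((2:ℝ)/3) := by linarith
    have hsplit : x ^ ((2:ℝ)/3) * x ^ ((1:ℝ)/3) = x := by
      rw [← Real.rpow_add hx0]; norm_num
    have h4 : x ^ ((1:ℝ)/3) ≤ 2 * L := by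
      have : x ^ ((2:ℝ)/3) * x ^ ((1:ℝ)/3) ≤ x ^ ((2:ℝ)/3) * (2 * L) := by
        rw [hsplit]; nlinarith
      exact le_of_mul_le_mul_left (by linarith [this]) hx23
    have h5 : (x ^ ((1:ℝ)/3)) ^ (3:ℕ) ≤ (2 * L) ^ (3:ℕ) :=
      pow_le_pow_left₀ (Real.rpow_nonneg hx _) h4 3
    rw [← Real.rpow_natCast (x ^ ((1:ℝ)/3)) 3, ← Real.rpow_mul hx] at h5
    norm_num at h5
    nlinarith
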